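/- Let n ≥ 1, w ∈ ℝ_+^n, and −Σ_i w_i ≤ b < 0. Let f(x) = w·x + b and g(x) = max(0, f(x)) on [0,1]^n. For a permutation π of [n], let T_π = {x ∈ ℝ^n : 1 ≥ x_{π(1)} ≥ x_{π(2)} ≥ … ≥ x_{π(n)} ≥ 0}, and let r_π be the unique affine function agreeing with g on the n+1 vertices v_j = Σ_{i=1}^j e(π(i)), j = 0,…,n, of T_π. Then r_π is a linear function (r_π(0) = 0), and there exist a set I ⊆ [n] and an index h ∉ I with F(I) ≥ 0 and F(I ∪ {h}) < 0 such that r_π(x) = F(I)·x_h + Σ_{i∈I} w_i x_i, where F(J) = Σ_{i∉J} w_i + b. -/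

import Mathlib

/-- the affine interpolant `r_π` of `g(x) = max(0, w·x + b)` on the Kuhn
simplex `T_π` is linear and has the form `r_{I,h}(x) = F(I)·x_h + Σ_{i∈I} w_i x_i`
for some pair `(I,h)` with `F(I) ≥ 0 > F(I∪{h})`, where `F(J) = Σ_{i∉J} w_i + b`. -/
theorem stmt8 (n : ℕ) (hn : 1 ≤ n) (w : Fin n → ℝ) (hw : ∀ i, 0 ≤ w i) (b : ℝ)
    (hb1 : -∑ i, w i ≤ b) (hb2 : b < 0)
    (π : Equiv.Perm (Fin n))
    (v : ℕ → Fin n → ℝ)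
    (hv : ∀ j i, v j i = if ((π.symm i : Fin n) : ℕ) < j then 1 else 0)
    (r : (Fin n → ℝ) → ℝ) (a : Fin n → ℝ) (c : ℝ)
    (hr : ∀ x, r x = ∑ i, a i * x i + c)
    (hint : ∀ j : ℕ, j ≤ n → r (v j) = max 0 (∑ i, w i * v j i + b)) :
    r (fun _ => 0) = 0 ∧
    ∃ (I : Finset (Fin n)) (h : Fin n), h ∉ I ∧
      0 ≤ (∑ i ∈ Iᶜ, w i) + b ∧ (∑ i ∈ (insert h I)ᶜ, w i) + b < 0 ∧
      ∀ x : Fin n → ℝ, r x = ((∑ i ∈ Iᶜ, w i) + b) * x h + ∑ i ∈ I, w i * x i := by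
  classical
  set S : ℕ → ℝ := fun j =>
    (∑ i ∈ Finset.univ.filter (fun i : Fin n => ((π.symm i : Fin n) : ℕ) < j), w i) + b
    with hSdef
  have hsum : ∀ j : ℕ, (∑ i, w i * v j i) + b = S j := by
    intro j
    simp only [hSdef]
    congr 1
    rw [Finset.sum_filter]
    apply Finset.sum_congr rfl
    intro i _
    rw [hv]
    split <;> simp
  have hra : ∀ j : ℕ, r (v j) =
      (∑ i ∈ Finset.univ.filter (fun i : Fin n => ((π.symm i : Fin n) : ℕ) < j), a i) + c := by
    intro j
    rw [hr, Finset.sum_filter]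
    congr 1
    apply Finset.sum_congr rfl
    intro i _
    rw [hv]
    split <;> simp
  have hS0 : S 0 = b := by simp [hSdef]
  have hc : c = 0 := by
    have h0 := hint 0 (by omega)
    rw [hra, hsum, hS0] at h0
    simp only [Nat.not_lt_zero, Finset.filter_false, Finset.sum_empty, zero_add] at h0
    rw [h0, max_eq_left hb2.le]
  have hr0 : r (fun _ => 0) = 0 := by rw [hr]; simp [hc]
  -- monotonicity of S
  have hmono : ∀ j m : ℕ, j ≤ m → S j ≤ S m := by
    intro j m hjm
    simp only [hSdef]
    refine add_le_add ?_ le_rfl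
    apply Finset.sum_le_sum_of_subset_of_nonneg
    · intro i hi
      simp only [Finset.mem_filter, Finset.mem_univ, true_and] at hi ⊢
      omega
    · intro i _ _
      exact hw i
  have hSn : 0 ≤ S n := by
    have : Finset.univ.filter (fun i : Fin n => ((π.symm i : Fin n) : ℕ) < n) = Finset.univ := by
      apply Finset.filter_true_of_mem
      intro i _
      exact (π.symm i).isLt
    simp only [hSdef, this]
    linarith
  -- find the crossing index k
  set P : ℕ → Prop := fun j => j < n ∧ S j < 0 with hPdef
  have hP0 : P 0 := ⟨hn, by rw [hS0]; exact hb2⟩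
  set k : ℕ := Nat.findGreatest P n with hkdef
  have hPk : P k := Nat.findGreatest_spec (Nat.zero_le n) hP0
  have hkn : k < n := hPk.1
  have hSk : S k < 0 := hPk.2
  have hk1 : 0 ≤ S (k + 1) := by
    by_cases hkn' : k + 1 = n
    · rw [hkn']; exact hSn
    · have hle : k + 1 ≤ n := hkn
      have hgr : ¬ P (k + 1) := Nat.findGreatest_is_greatest (Nat.lt_succ_self k) hle
      simp only [hPdef, not_and, not_lt] at hgr
      exact hgr (by omega)
  -- the set identity for incrementing the filter bound
  have hmemeq : ∀ (m : Fin n) (i : Fin n), i = π m ↔ ((π.symm i : Fin n) : ℕ) = (m : ℕ) := by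
    intro m i
    rw [← Equiv.symm_apply_eq, Fin.ext_iff]
  have hsetins : ∀ m : Fin n,
      Finset.univ.filter (fun i : Fin n => ((π.symm i : Fin n) : ℕ) < (m : ℕ) + 1)
      = insert (π m) (Finset.univ.filter (fun i : Fin n => ((π.symm i : Fin n) : ℕ) < (m : ℕ))) := by
    intro m
    ext i
    simp only [Finset.mem_filter, Finset.mem_univ, true_and, Finset.mem_insert, hmemeq m i]
    omega
  have hnotmem : ∀ m : Fin n,
      π m ∉ Finset.univ.filter (fun i : Fin n => ((π.symm i : Fin n) : ℕ) < (m : ℕ)) := by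
    intro m
    simp
  have hins : ∀ m : Fin n, S ((m : ℕ) + 1) = w (π m) + S (m : ℕ) := by
    intro m
    simp only [hSdef]
    rw [hsetins m, Finset.sum_insert (hnotmem m)]
    ring
  have hdiff : ∀ m : Fin n, a (π m) = max 0 (S ((m : ℕ) + 1)) - max 0 (S (m : ℕ)) := by
    intro m
    have h1 := hint ((m : ℕ) + 1) m.isLt
    have h2 := hint (m : ℕ) (le_of_lt m.isLt)
    rw [hra, hsum] at h1 h2
    rw [hsetins m, Finset.sum_insert (hnotmem m)] at h1
    linarith
  -- coefficient values
  have ha : ∀ m : Fin n, a (π m) =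
      if (m : ℕ) = k then S (k + 1) else if k < (m : ℕ) then w (π m) else 0 := by
    intro m
    rw [hdiff m]
    rcases lt_trichotomy (m : ℕ) k with hlt | heq | hgt
    · have h1 : S ((m : ℕ) + 1) ≤ S k := hmono _ _ (by omega)
      have h2 : S (m : ℕ) ≤ S k := hmono _ _ (by omega)
      rw [if_neg (by omega), if_neg (by omega), max_eq_left (by linarith), max_eq_left (by linarith)]
      ring
    · rw [if_pos heq, heq, max_eq_left hSk.le, max_eq_right hk1]
      ring
    · have h1 : 0 ≤ S (m : ℕ) := le_trans hk1 (hmono _ _ (by omega))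
      have h2 : 0 ≤ S ((m : ℕ) + 1) := le_trans h1 (hmono _ _ (by omega))
      rw [if_neg (by omega), if_pos hgt, max_eq_right h1, max_eq_right h2, hins m]
      ring
  -- define I and h
  refine ⟨hr0, Finset.univ.filter (fun i : Fin n => k < ((π.symm i : Fin n) : ℕ)),
    π ⟨k, hkn⟩, ?_, ?_, ?_, ?_⟩
  · simp
  · have hcompl : (Finset.univ.filter (fun i : Fin n => k < ((π.symm i : Fin n) : ℕ)))ᶜ
        = Finset.univ.filter (fun i : Fin n => ((π.symm i : Fin n) : ℕ) < k + 1) := by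
      ext i
      simp only [Finset.mem_compl, Finset.mem_filter, Finset.mem_univ, true_and]
      omega
    rw [hcompl]
    exact hk1
  · have hcompl2 : (insert (π ⟨k, hkn⟩)
        (Finset.univ.filter (fun i : Fin n => k < ((π.symm i : Fin n) : ℕ))))ᶜ
        = Finset.univ.filter (fun i : Fin n => ((π.symm i : Fin n) : ℕ) < k) := by
      ext i
      simp only [Finset.mem_compl, Finset.mem_insert, Finset.mem_filter, Finset.mem_univ,
        true_and, not_or, not_lt, hmemeq ⟨k, hkn⟩ i]
      omega
    rw [hcompl2]
    exact hSk
  · intro x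
    have hcompl : (Finset.univ.filter (fun i : Fin n => k < ((π.symm i : Fin n) : ℕ)))ᶜ
        = Finset.univ.filter (fun i : Fin n => ((π.symm i : Fin n) : ℕ) < k + 1) := by
      ext i
      simp only [Finset.mem_compl, Finset.mem_filter, Finset.mem_univ, true_and]
      omega
    have hFI : (∑ i ∈ (Finset.univ.filter (fun i : Fin n => k < ((π.symm i : Fin n) : ℕ)))ᶜ, w i) + b
        = S (k + 1) := by
      rw [hcompl]
    rw [hr, hc, add_zero, hFI]
    set I : Finset (Fin n) := Finset.univ.filter (fun i : Fin n => k < ((π.symm i : Fin n) : ℕ)) with hI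
    set h₀ : Fin n := π ⟨k, hkn⟩ with hh0
    have hnotI : h₀ ∉ I := by simp [hI, hh0]
    have hsub : insert h₀ I ⊆ Finset.univ := Finset.subset_univ _
    have hzero : ∀ i ∈ Finset.univ, i ∉ insert h₀ I → a i * x i = 0 := by
      intro i _ hi
      simp only [Finset.mem_insert, hI, Finset.mem_filter, Finset.mem_univ, true_and, not_or,
        not_lt, hh0, hmemeq ⟨k, hkn⟩ i] at hi
      have := ha (π.symm i)
      rw [Equiv.apply_symm_apply] at this
      rw [this, if_neg (by omega), if_neg (by omega)]
      ring
    rw [← Finset.sum_subset hsub hzero, Finset.sum_insert hnotI]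
    have hah : a h₀ = S (k + 1) := by
      have := ha ⟨k, hkn⟩
      rwa [if_pos rfl] at this
    rw [hah]
    congr 1
    apply Finset.sum_congr rfl
    intro i hi
    simp only [hI, Finset.mem_filter, Finset.mem_univ, true_and] at hi
    have := ha (π.symm i)
    rw [Equiv.apply_symm_apply] at this
    rw [this, if_neg (by omega), if_pos hi]
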